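/- Let d be a pseudometric on a type α, let Σ¹,…,Σ^C (C ≥ 1) be nonempty finite subsets of α with positive weights λ₁,…,λ_C, let λ* = max_k λ_k and M = {k : λ_k = λ*}. Fix any ρ ∈ α and set W = max_k λ_k·d_med(ρ, Σ^k). Then the average, over all σ drawn from the disjoint (multiplicity-counted) union ⋃_{k∈M} Σ^k, of the objective max_j λ_j·d_med(σ, Σ^j) is at most 2W; that is, (1/∑_{k∈M}|Σ^k|)·∑_{k∈M}∑_{σ∈Σ^k} max_j λ_j·d_med(σ, Σ^j) ≤ 2W. -/

import Mathlib

/-- The median distance between a point `π` and a finite set `T` of points: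
`(1/|T|) · ∑_{σ ∈ T} d(π, σ)`. -/
noncomputable def medDist {α : Type*} (d : α → α → ℝ) (π : α) (T : Finset α) : ℝ :=
  (1 / (T.card : ℝ)) * ∑ σ ∈ T, d π σ

/-- The Pick-Rnd-Perm guarantee: the average, over all `σ` in the
multiplicity-counted union of the classes of maximal weight, of the objective
`max_j λ_j · d_med(σ, Σ^j)` is at most `2W`. -/
theorem avg_pick_rnd_perm_le_two_W {α : Type*} (d : α → α → ℝ)
    (hd_self : ∀ x, d x x = 0)
    (hd_symm : ∀ x y, d x y = d y x)
    (hd_nonneg : ∀ x y, 0 ≤ d x y)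
    (hd_tri : ∀ x y z, d x z ≤ d x y + d y z)
    {C : ℕ} (hC : 0 < C)
    (S : Fin C → Finset α) (hS : ∀ k, (S k).Nonempty)
    (lam : Fin C → ℝ) (hlam : ∀ k, 0 < lam k)
    (lamStar : ℝ)
    (hlamStar : lamStar = Finset.univ.sup' ⟨⟨0, hC⟩, Finset.mem_univ _⟩ lam)
    (M : Finset (Fin C)) (hM : M = Finset.univ.filter (fun k => lam k = lamStar))
    (ρ : α) (W : ℝ)
    (hW : W = Finset.univ.sup' ⟨⟨0, hC⟩, Finset.mem_univ _⟩
      (fun k => lam k * medDist d ρ (S k))) :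
    (1 / (∑ k ∈ M, ((S k).card : ℝ))) *
      ∑ k ∈ M, ∑ σ ∈ S k,
        Finset.univ.sup' ⟨⟨0, hC⟩, Finset.mem_univ _⟩
          (fun j => lam j * medDist d σ (S j)) ≤ 2 * W := by
  have hne : (Finset.univ : Finset (Fin C)).Nonempty := ⟨⟨0, hC⟩, Finset.mem_univ _⟩
  have hlamStar_ge : ∀ j, lam j ≤ lamStar := by
    intro j; rw [hlamStar]; exact Finset.le_sup' lam (Finset.mem_univ j)
  have hW_ge : ∀ j, lam j * medDist d ρ (S j) ≤ W := by
    intro j; rw [hW]; exact Finset.le_sup' (fun k => lam k * medDist d ρ (S k)) (Finset.mem_univ j)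
  have hcardpos : ∀ j, (0:ℝ) < ((S j).card : ℝ) := by
    intro j; exact_mod_cast Finset.card_pos.2 (hS j)
  have hmed_nonneg : ∀ π T, 0 ≤ medDist d π T := by
    intro π T
    exact mul_nonneg (by positivity) (Finset.sum_nonneg fun _ _ => hd_nonneg _ _)
  have hW_nonneg : 0 ≤ W :=
    le_trans (mul_nonneg (hlam ⟨0, hC⟩).le (hmed_nonneg _ _)) (hW_ge ⟨0, hC⟩)
  -- triangle inequality for medDist
  have hmed_tri : ∀ σ j, medDist d σ (S j) ≤ d σ ρ + medDist d ρ (S j) := by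
    intro σ j
    unfold medDist
    have h1 : ∑ τ ∈ S j, d σ τ ≤ ∑ τ ∈ S j, (d σ ρ + d ρ τ) :=
      Finset.sum_le_sum fun τ _ => hd_tri σ ρ τ
    have hc := hcardpos j
    calc (1/((S j).card:ℝ)) * ∑ τ ∈ S j, d σ τ
        ≤ (1/((S j).card:ℝ)) * ∑ τ ∈ S j, (d σ ρ + d ρ τ) := by
          apply mul_le_mul_of_nonneg_left h1; positivity
      _ = d σ ρ + (1/((S j).card:ℝ)) * ∑ τ ∈ S j, d ρ τ := by
          rw [Finset.sum_add_distrib, mul_add, Finset.sum_const, nsmul_eq_mul]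
          field_simp
  -- pointwise bound on the objective
  have hpt : ∀ σ : α,
      (Finset.univ.sup' hne (fun j => lam j * medDist d σ (S j))) ≤ lamStar * d σ ρ + W := by
    intro σ
    apply Finset.sup'_le
    intro j _
    calc lam j * medDist d σ (S j) ≤ lam j * (d σ ρ + medDist d ρ (S j)) :=
          mul_le_mul_of_nonneg_left (hmed_tri σ j) (hlam j).le
      _ = lam j * d σ ρ + lam j * medDist d ρ (S j) := mul_add _ _ _
      _ ≤ lamStar * d σ ρ + W :=
          add_le_add (mul_le_mul_of_nonneg_right (hlamStar_ge j) (hd_nonneg _ _)) (hW_ge j)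
  -- per-class bound
  have hsum : ∀ k ∈ M,
      ∑ σ ∈ S k, Finset.univ.sup' hne (fun j => lam j * medDist d σ (S j))
        ≤ ((S k).card : ℝ) * (2 * W) := by
    intro k hk
    have hkmax : lam k = lamStar := by
      rw [hM] at hk; exact (Finset.mem_filter.1 hk).2
    have hsymmsum : ∑ σ ∈ S k, d σ ρ = ∑ σ ∈ S k, d ρ σ :=
      Finset.sum_congr rfl fun σ _ => hd_symm σ ρ
    have hc := hcardpos k
    calc ∑ σ ∈ S k, Finset.univ.sup' hne (fun j => lam j * medDist d σ (S j))
        ≤ ∑ σ ∈ S k, (lamStar * d σ ρ + W) := Finset.sum_le_sum fun σ _ => hpt σ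
      _ = ((S k).card:ℝ) * (lam k * medDist d ρ (S k)) + ((S k).card:ℝ) * W := by
          rw [Finset.sum_add_distrib, ← Finset.mul_sum, Finset.sum_const, nsmul_eq_mul,
            hsymmsum, ← hkmax]
          unfold medDist
          field_simp
      _ ≤ ((S k).card:ℝ) * W + ((S k).card:ℝ) * W := by
          apply add_le_add_left
          exact mul_le_mul_of_nonneg_left (hW_ge k) hc.le
      _ = ((S k).card : ℝ) * (2 * W) := by ring
  -- M is nonempty
  have hMne : M.Nonempty := by
    obtain ⟨k, _, hk⟩ := Finset.exists_mem_eq_sup' hne lam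
    exact ⟨k, by rw [hM]; exact Finset.mem_filter.2 ⟨Finset.mem_univ k, hlamStar ▸ hk.symm⟩⟩
  have hT : 0 < ∑ k ∈ M, ((S k).card : ℝ) :=
    Finset.sum_pos (fun k _ => hcardpos k) hMne
  rw [one_div, inv_mul_le_iff₀ hT]
  calc ∑ k ∈ M, ∑ σ ∈ S k,
        Finset.univ.sup' ⟨⟨0, hC⟩, Finset.mem_univ _⟩ (fun j => lam j * medDist d σ (S j))
      ≤ ∑ k ∈ M, ((S k).card : ℝ) * (2 * W) := Finset.sum_le_sum hsum
    _ = (∑ k ∈ M, ((S k).card : ℝ)) * (2 * W) := by rw [← Finset.sum_mul]
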